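/- Define the derived sequence r : {1,2,3,…} → A of η by r(j) := η(2j − 1) (so that η = p⁽⁰⁾ r(1) p⁽⁰⁾ r(2) p⁽⁰⁾ ⋯ with p⁽⁰⁾ = a). Then r takes values in {x,y,z}, and: (i) the letters y and z occur isolated in r, i.e., if r(j) ∈ {y,z} then r(j+1) = x and, when j ≥ 2, also r(j−1) = x; (ii) the letter x occurs either isolated or in blocks of exactly three, i.e., every maximal block of consecutive positions j with r(j) = x has length 1 or 3. -/

import Mathlib

/-- The four-letter alphabet `A = {a, x, y, z}`. -/
inductive A : Type
  | a | x | y | z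
  deriving DecidableEq, Repr

/-- The substitution `τ : a ↦ axa, x ↦ y, y ↦ z, z ↦ x`. -/
def tau : A → List A
  | A.a => [A.a, A.x, A.a]
  | A.x => [A.y]
  | A.y => [A.z]
  | A.z => [A.x]

/-- The substitution `τ` extended to finite words by concatenation. -/
def tauW (w : List A) : List A := w.flatMap tau

/-- `pw n = τⁿ(a)`, a word of length `2^(n+1) - 1`. -/
def pw : ℕ → List A
  | 0 => [A.a]
  | n + 1 => tauW (pw n)

/-- The fixed point `η` of `τ`: the unique one-sided infinite word having every
`τⁿ(a)` as a prefix.  (Since `pw (n+1)` has length `2^(n+2) - 1 > n`, reading its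
`n`-th letter is well defined and independent of the choice of a large enough iterate.) -/
def eta (n : ℕ) : A := (pw (n + 1)).getD n A.a

/-- `w` is a (finite) factor of `η`. -/
def IsFactorEta (w : List A) : Prop :=
  ∃ i : ℕ, w = (List.range w.length).map (fun k => eta (i + k))

/-- The derived sequence `r` of `η`, defined for `j ≥ 1` by `r(j) = η(2j - 1)`,
so that `η = p⁽⁰⁾ r(1) p⁽⁰⁾ r(2) p⁽⁰⁾ ⋯` with `p⁽⁰⁾ = a`. -/
def rseq (j : ℕ) : A := eta (2 * j - 1)

/- auxiliary -/
def s : A → A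
  | A.a => A.x
  | A.x => A.y
  | A.y => A.z
  | A.z => A.x

def itl : List A → List A
  | [] => [A.a]
  | c :: t => A.a :: c :: itl t

def ib (u : List A) : List A := u.flatMap (fun c => [s c, A.x])

def oseq : ℕ → List A
  | 0 => [A.x]
  | n + 1 => A.x :: ib (oseq n)

lemma s_ne_a (c : A) : s c ≠ A.a := by cases c <;> simp [s]

lemma tau_ne_a {c : A} (h : c ≠ A.a) : tau c = [s c] := by
  cases c <;> simp_all [tau, s]

lemma tauW_cons (c : A) (w : List A) : tauW (c :: w) = tau c ++ tauW w := by
  simp [tauW]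

lemma tauW_append (u v : List A) : tauW (u ++ v) = tauW u ++ tauW v := by
  simp [tauW]

lemma oseq_ne_a : ∀ n, ∀ c ∈ oseq n, c ≠ A.a := by
  intro n
  induction n with
  | zero => intro c hc; simp [oseq] at hc; subst hc; simp
  | succ n ih =>
      intro c hc
      simp [oseq, ib] at hc
      rcases hc with h | ⟨d, _, h | h⟩ <;> subst h
      · simp
      · exact s_ne_a d
      · simp

lemma tauW_itl (u : List A) (h : ∀ c ∈ u, c ≠ A.a) :
    tauW (itl u) = itl (A.x :: ib u) := by
  induction u with
  | nil => rfl
  | cons c t ih =>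
      have hc : c ≠ A.a := h c (by simp)
      have ht : ∀ d ∈ t, d ≠ A.a := fun d hd => h d (by simp [hd])
      show tauW (A.a :: c :: itl t) = _
      rw [tauW_cons, tauW_cons, tau_ne_a hc, ih ht]
      simp [tau, itl, ib, List.flatMap]

lemma pw_itl : ∀ n, pw (n + 1) = itl (oseq n) := by
  intro n
  induction n with
  | zero => rfl
  | succ n ih =>
      show tauW (pw (n+1)) = _
      rw [ih, tauW_itl _ (oseq_ne_a n)]
      rfl

lemma map_s_itl : ∀ u : List A, (itl u).map s = A.x :: ib u := by
  intro u
  induction u with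
  | nil => rfl
  | cons c t ih => simp [itl, ib, ih, s]

lemma oseq_eq : ∀ n, oseq n = (pw n).map s := by
  intro n
  cases n with
  | zero => rfl
  | succ n => rw [pw_itl, map_s_itl]; rfl

lemma itl_length (u : List A) : (itl u).length = 2 * u.length + 1 := by
  induction u with
  | nil => rfl
  | cons c t ih => simp [itl, ih]; ring

lemma pw_length : ∀ n, (pw n).length = 2 ^ (n + 1) - 1 := by
  intro n
  induction n with
  | zero => rfl
  | succ n ih =>
      rw [pw_itl, itl_length, oseq_eq, List.length_map, ih]
      have : 1 ≤ 2 ^ (n + 1) := Nat.one_le_two_pow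
      have h2 : (2:ℕ) ^ (n + 2) = 2 * 2 ^ (n+1) := by ring
      omega

lemma lt_pw_length (n : ℕ) : n < (pw n).length := by
  rw [pw_length]
  have := Nat.lt_two_pow_self (n := n)
  have : 2 ^ n ≤ 2 ^ (n+1) := Nat.pow_le_pow_right (by norm_num) (by omega)
  omega

lemma pw_prefix (n : ℕ) : pw n <+: pw (n + 1) := by
  induction n with
  | zero => exact ⟨[A.x, A.a], rfl⟩
  | succ n ih =>
      obtain ⟨t, ht⟩ := ih
      refine ⟨tauW t, ?_⟩
      show pw (n+1) ++ tauW t = tauW (pw (n+1))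
      conv_rhs => rw [← ht]
      rw [tauW_append]; rfl

lemma pw_prefix_le {m n : ℕ} (h : m ≤ n) : pw m <+: pw n := by
  induction n with
  | zero => rw [Nat.le_zero.mp h]
  | succ n ih =>
      rcases Nat.lt_or_ge m (n+1) with h' | h'
      · exact (ih (by omega)).trans (pw_prefix n)
      · have : m = n + 1 := by omega
        rw [this]

lemma getD_prefix {u v : List A} (h : u <+: v) {n : ℕ} (hn : n < u.length) (d : A) :
    v.getD n d = u.getD n d := by
  obtain ⟨t, rfl⟩ := h
  rw [List.getD_eq_getElem _ _ hn, List.getD_eq_getElem _ _ (by simp; omega)]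
  exact (List.getElem_append_left hn).symm ▸ rfl

lemma eta_pw {m n : ℕ} (h : n < (pw m).length) : eta n = (pw m).getD n A.a := by
  unfold eta
  rcases Nat.le_total m (n+1) with h' | h'
  · exact getD_prefix (pw_prefix_le h') h A.a
  · have hn : n < (pw (n+1)).length :=
      lt_of_lt_of_le (lt_pw_length n) (pw_prefix n).length_le
    exact (getD_prefix (pw_prefix_le h') hn A.a).symm

lemma itl_getD_even : ∀ (u : List A) (k : ℕ), (itl u).getD (2 * k) A.a = A.a := by
  intro u
  induction u with
  | nil =>
      intro k
      cases k with
      | zero => rfl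
      | succ k => show List.getD [A.a] (2*k+2) A.a = A.a
                  simp [List.getD]
  | cons c t ih =>
      intro k
      cases k with
      | zero => rfl
      | succ k =>
          have h : 2 * (k+1) = 2*k + 1 + 1 := by ring
          rw [h]
          show (A.a :: c :: itl t).getD (2*k+1+1) A.a = A.a
          rw [List.getD_cons_succ, List.getD_cons_succ]
          exact ih k

lemma itl_getD_odd : ∀ (u : List A) (k : ℕ) (d : A),
    (itl u).getD (2 * k + 1) d = u.getD k d := by
  intro u
  induction u with
  | nil =>
      intro k d
      show List.getD [A.a] (2*k+1) d = List.getD [] k d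
      cases k <;> simp [List.getD]
  | cons c t ih =>
      intro k d
      cases k with
      | zero => rfl
      | succ k =>
          have h : 2 * (k+1) + 1 = 2*k + 1 + 1 + 1 := by ring
          rw [h]
          show (A.a :: c :: itl t).getD (2*k+1+1+1) d = (c :: t).getD (k+1) d
          rw [List.getD_cons_succ, List.getD_cons_succ, List.getD_cons_succ]
          exact ih k d

lemma eta_even (n : ℕ) : eta (2 * n) = A.a := by
  show (pw (2*n+1)).getD (2*n) A.a = A.a
  rw [pw_itl]
  exact itl_getD_even _ n

lemma eta_odd (n : ℕ) : eta (2 * n + 1) = s (eta n) := by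
  show (pw (2*n+1+1)).getD (2*n+1) A.a = _
  rw [pw_itl, itl_getD_odd, oseq_eq]
  have h1 : n < (pw (2*n+1)).length := by
    have := lt_pw_length (2*n+1); omega
  rw [List.getD_eq_getElem _ _ (by simpa using h1), List.getElem_map,
    eta_pw h1, List.getD_eq_getElem _ _ h1]

lemma r_odd (k : ℕ) : rseq (2 * k + 1) = A.x := by
  unfold rseq
  have h : 2 * (2 * k + 1) - 1 = 2 * (2 * k) + 1 := by omega
  rw [h, eta_odd, eta_even]
  rfl

lemma r_even {k : ℕ} (h : 1 ≤ k) : rseq (2 * k) = s (rseq k) := by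
  unfold rseq
  have h2 : 2 * (2 * k) - 1 = 2 * (2 * k - 1) + 1 := by omega
  rw [h2, eta_odd]

lemma r_mem {j : ℕ} (h : 1 ≤ j) : rseq j ∈ ({A.x, A.y, A.z} : Set A) := by
  rcases Nat.even_or_odd j with ⟨k, hk⟩ | ⟨k, hk⟩
  · have hk1 : 1 ≤ k := by omega
    have : j = 2 * k := by omega
    rw [this, r_even hk1]
    cases rseq k <;> simp [s]
  · rw [hk, r_odd]; simp


/-- The derived sequence takes values in `{x,y,z}`; the letters `y` and `z` occur
isolated (preceded and followed by `x`), and every maximal block of consecutive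
occurrences of `x` has length `1` or `3`. -/
theorem derived_sequence_structure :
    (∀ j : ℕ, 1 ≤ j → rseq j ∈ ({A.x, A.y, A.z} : Set A)) ∧
    (∀ j : ℕ, 1 ≤ j → rseq j ∈ ({A.y, A.z} : Set A) →
      rseq (j + 1) = A.x ∧ (2 ≤ j → rseq (j - 1) = A.x)) ∧
    (∀ j : ℕ, 1 ≤ j → rseq j = A.x → (j = 1 ∨ rseq (j - 1) ≠ A.x) →
      rseq (j + 1) ≠ A.x ∨
      (rseq (j + 1) = A.x ∧ rseq (j + 2) = A.x ∧ rseq (j + 3) ≠ A.x)) := by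
  refine ⟨fun j hj => r_mem hj, ?_, ?_⟩
  · intro j hj hm
    rcases Nat.even_or_odd j with ⟨k, hk⟩ | ⟨k, hk⟩
    · have hk1 : 1 ≤ k := by omega
      have hj2 : j = 2 * k := by omega
      constructor
      · have : j + 1 = 2 * k + 1 := by omega
        rw [this, r_odd]
      · intro h2
        have : j - 1 = 2 * (k - 1) + 1 := by omega
        rw [this, r_odd]
    · exfalso
      have : j = 2 * k + 1 := by omega
      rw [this, r_odd] at hm
      simp at hm
  · intro j hj hx hprev
    by_cases h : rseq (j + 1) = A.x
    · right
      rcases Nat.even_or_odd j with ⟨k, hk⟩ | ⟨k, hk⟩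
      · exfalso
        have hk1 : 1 ≤ k := by omega
        have hjne : j ≠ 1 := by omega
        have hprev' : rseq (j - 1) ≠ A.x := hprev.resolve_left hjne
        have : j - 1 = 2 * (k - 1) + 1 := by omega
        rw [this, r_odd] at hprev'
        exact hprev' rfl
      · -- j = 2k+1 odd
        have hj1 : j + 1 = 2 * (k + 1) := by omega
        have hk1 : 1 ≤ k + 1 := by omega
        have hz : rseq (k + 1) = A.z := by
          have hsm := r_mem hk1
          rw [hj1, r_even hk1] at h
          rcases hsm with hh | hh | hh <;>
            simp_all [s]
        -- k+1 must be even
        have hke : Even (k + 1) := by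
          rcases Nat.even_or_odd (k + 1) with he | ⟨m, hm⟩
          · exact he
          · exfalso
            rw [show k + 1 = 2 * m + 1 by omega, r_odd] at hz
            exact absurd hz (by simp)
        obtain ⟨m, hm⟩ := hke
        refine ⟨h, ?_, ?_⟩
        · have : j + 2 = 2 * (k + 1) + 1 := by omega
          rw [this, r_odd]
        · have h3 : j + 3 = 2 * (k + 2) := by omega
          have h4 : k + 2 = 2 * m + 1 := by omega
          rw [h3, r_even (by omega), h4, r_odd]
          simp [s]
    · exact Or.inl h
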